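/- Let 𝒜₁ and 𝒜₂ be two sub-σ-algebras of a probability space, let p > 1 and q > 1 with 1/p + 1/q = 1, and let X be an 𝒜₁-measurable random variable in L^p and Y an 𝒜₂-measurable random variable in L^q. Then Cov(X, Y) ≤ 2·φ(𝒜₁, 𝒜₂)^{1/p}·‖X‖_p·‖Y‖_q. Moreover, 0 ≤ φ(𝒜₁, 𝒜₂) ≤ 1. -/

import Mathlib

open MeasureTheory Filter Set
open scoped ENNReal Topology

/-- Covariance of two real random variables (when the relevant integrals exist). -/
noncomputable def cov {Ω : Type*} [MeasurableSpace Ω] (P : Measure Ω) (U V : Ω → ℝ) : ℝ :=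
  ∫ ω, U ω * V ω ∂P - (∫ ω, U ω ∂P) * ∫ ω, V ω ∂P

/-- The φ-mixing coefficient between two sub-σ-algebras. -/
noncomputable def phiCoef {Ω : Type*} [MeasurableSpace Ω] (P : Measure Ω)
    (m₁ m₂ : MeasurableSpace Ω) : ℝ :=
  sSup {r : ℝ | ∃ A B : Set Ω, MeasurableSet[m₁] A ∧ MeasurableSet[m₂] B ∧ P A ≠ 0 ∧
    r = |(P B).toReal - (P (A ∩ B)).toReal / (P A).toReal|}

set_option linter.unusedSectionVars false

section Aux
variable {Ω : Type*} {A1 A2 : MeasurableSpace Ω} [m : MeasurableSpace Ω]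
  {P : Measure Ω} [IsProbabilityMeasure P]

def phiSet (P : Measure Ω) (m₁ m₂ : MeasurableSpace Ω) : Set ℝ :=
  {r : ℝ | ∃ A B : Set Ω, MeasurableSet[m₁] A ∧ MeasurableSet[m₂] B ∧ P A ≠ 0 ∧
    r = |(P B).toReal - (P (A ∩ B)).toReal / (P A).toReal|}

lemma phiCoef_eq : phiCoef P A1 A2 = sSup (phiSet P A1 A2) := rfl

lemma zero_mem_phiSet : (0 : ℝ) ∈ phiSet P A1 A2 := by
  refine ⟨univ, univ, MeasurableSet.univ, MeasurableSet.univ, by simp, by simp⟩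

lemma phiSet_ub : ∀ r ∈ phiSet P A1 A2, r ≤ 1 := by
  rintro r ⟨A, B, hA, hB, hA0, rfl⟩
  have hB1 : (P B).toReal ≤ 1 := by
    simpa using ENNReal.toReal_mono (by simp) (prob_le_one (μ := P) (s := B))
  have hABle : (P (A ∩ B)).toReal ≤ (P A).toReal :=
    ENNReal.toReal_mono (measure_ne_top _ _) (measure_mono inter_subset_left)
  have hApos : 0 < (P A).toReal :=
    ENNReal.toReal_pos hA0 (measure_ne_top _ _)
  have hq0 : 0 ≤ (P (A ∩ B)).toReal / (P A).toReal :=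
    div_nonneg ENNReal.toReal_nonneg hApos.le
  have hq1 : (P (A ∩ B)).toReal / (P A).toReal ≤ 1 :=
    (div_le_one hApos).mpr hABle
  rw [abs_sub_le_iff]
  constructor <;> linarith [ENNReal.toReal_nonneg (a := P B)]

lemma phiSet_bddAbove : BddAbove (phiSet P A1 A2) := ⟨1, phiSet_ub⟩

lemma phi_nonneg : 0 ≤ phiCoef P A1 A2 :=
  le_csSup phiSet_bddAbove zero_mem_phiSet

lemma phi_le_one : phiCoef P A1 A2 ≤ 1 :=
  csSup_le ⟨0, zero_mem_phiSet⟩ phiSet_ub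

set_option linter.unusedSectionVars false

/-- elementary bound via the φ coefficient -/
lemma abs_e_le_phi {A B : Set Ω} (hA : MeasurableSet[A1] A) (hB : MeasurableSet[A2] B) :
    |(P (A ∩ B)).toReal - (P A).toReal * (P B).toReal| ≤ phiCoef P A1 A2 * (P A).toReal := by
  by_cases hA0 : P A = 0
  · have h1 : P (A ∩ B) = 0 := measure_inter_null_of_null_left B hA0
    simp [hA0, h1]
  · have hApos : 0 < (P A).toReal := ENNReal.toReal_pos hA0 (measure_ne_top _ _)
    have hmem : |(P B).toReal - (P (A ∩ B)).toReal / (P A).toReal| ∈ phiSet P A1 A2 :=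
      ⟨A, B, hA, hB, hA0, rfl⟩
    have hle : |(P B).toReal - (P (A ∩ B)).toReal / (P A).toReal| ≤ phiCoef P A1 A2 :=
      le_csSup phiSet_bddAbove hmem
    have := mul_le_mul_of_nonneg_right hle hApos.le
    calc |(P (A ∩ B)).toReal - (P A).toReal * (P B).toReal|
        = |(P B).toReal - (P (A ∩ B)).toReal / (P A).toReal| * (P A).toReal := by
          rw [← abs_of_pos hApos, ← abs_mul, abs_of_pos hApos, abs_sub_comm]
          congr 1
          field_simp
      _ ≤ phiCoef P A1 A2 * (P A).toReal := this

lemma abs_e_le_PB (A B : Set Ω) :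
    |(P (A ∩ B)).toReal - (P A).toReal * (P B).toReal| ≤ (P B).toReal := by
  have h1 : (P (A ∩ B)).toReal ≤ (P B).toReal :=
    ENNReal.toReal_mono (measure_ne_top _ _) (measure_mono inter_subset_right)
  have h2 : (P A).toReal * (P B).toReal ≤ (P B).toReal := by
    have hA1 : (P A).toReal ≤ 1 := by
      simpa using ENNReal.toReal_mono (by simp) (prob_le_one (μ := P) (s := A))
    nlinarith [ENNReal.toReal_nonneg (a := P B), ENNReal.toReal_nonneg (a := P A)]
  have h3 : 0 ≤ (P (A ∩ B)).toReal := ENNReal.toReal_nonneg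
  have h4 : 0 ≤ (P A).toReal * (P B).toReal :=
    mul_nonneg ENNReal.toReal_nonneg ENNReal.toReal_nonneg
  rw [abs_sub_le_iff]; constructor <;> linarith

lemma toReal_measure_biUnion {ι : Type*} {s : Finset ι} {C : ι → Set Ω}
    (hd : (↑s : Set ι).PairwiseDisjoint C) (hm : ∀ j ∈ s, MeasurableSet (C j)) :
    (P (⋃ j ∈ s, C j)).toReal = ∑ j ∈ s, (P (C j)).toReal := by
  rw [measure_biUnion_finset hd hm, ENNReal.toReal_sum (fun a _ => measure_ne_top _ _)]

/-- If every sub-sum is bounded by `M` in absolute value, the sum of absolute values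
is at most `2 * M`. -/
lemma sum_abs_le_two_mul {ι : Type*} (s : Finset ι) (F : ι → ℝ) (M : ℝ)
    (h : ∀ t ⊆ s, |∑ j ∈ t, F j| ≤ M) : ∑ j ∈ s, |F j| ≤ 2 * M := by
  classical
  have h1 := h (s.filter fun j => 0 ≤ F j) (Finset.filter_subset _ _)
  have h2 := h (s.filter fun j => ¬ 0 ≤ F j) (Finset.filter_subset _ _)
  rw [← Finset.sum_filter_add_sum_filter_not s (fun j => 0 ≤ F j) (fun j => |F j|)]
  have e1 : ∑ j ∈ s.filter (fun j => 0 ≤ F j), |F j|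
      = ∑ j ∈ s.filter (fun j => 0 ≤ F j), F j :=
    Finset.sum_congr rfl fun j hj => abs_of_nonneg (Finset.mem_filter.mp hj).2
  have e2 : ∑ j ∈ s.filter (fun j => ¬ 0 ≤ F j), |F j|
      = -∑ j ∈ s.filter (fun j => ¬ 0 ≤ F j), F j := by
    rw [← Finset.sum_neg_distrib]
    exact Finset.sum_congr rfl fun j hj =>
      abs_of_neg (lt_of_not_ge (Finset.mem_filter.mp hj).2)
  rw [e1, e2]
  have := abs_le.mp h1
  have := abs_le.mp h2
  linarith [(abs_le.mp h1).2, (abs_le.mp h2).1, (abs_le.mp h2).2]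

variable (hA1 : A1 ≤ m) (hA2 : A2 ≤ m)

lemma row_sum_le (hA1 : A1 ≤ m) (hA2 : A2 ≤ m) {A : Set Ω} (hA : MeasurableSet[A1] A)
    {ι : Type*} (s : Finset ι) (B : ι → Set Ω) (hB : ∀ j ∈ s, MeasurableSet[A2] (B j))
    (hd : (↑s : Set ι).PairwiseDisjoint B) :
    ∑ j ∈ s, |(P (A ∩ B j)).toReal - (P A).toReal * (P (B j)).toReal|
      ≤ 2 * (phiCoef P A1 A2 * (P A).toReal) := by
  classical
  refine sum_abs_le_two_mul s _ _ (fun t ht => ?_)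
  have hBt : ∀ j ∈ t, MeasurableSet[A2] (B j) := fun j hj => hB j (ht hj)
  have hdt : (↑t : Set ι).PairwiseDisjoint B := hd.subset (by exact_mod_cast ht)
  have hUB : MeasurableSet[A2] (⋃ j ∈ t, B j) := by
    exact MeasurableSet.biUnion t.countable_toSet hBt
  have hsum : ∑ j ∈ t, ((P (A ∩ B j)).toReal - (P A).toReal * (P (B j)).toReal)
      = (P (A ∩ ⋃ j ∈ t, B j)).toReal - (P A).toReal * (P (⋃ j ∈ t, B j)).toReal := by
    rw [Finset.sum_sub_distrib, ← Finset.mul_sum]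
    rw [← toReal_measure_biUnion hdt (fun j hj => hA2 _ (hBt j hj))]
    congr 1
    rw [Set.inter_iUnion₂]
    rw [toReal_measure_biUnion (fun i hi j hj hij =>
      ((hdt hi hj hij).mono inter_subset_right inter_subset_right))
      (fun j hj => (hA1 _ hA).inter (hA2 _ (hBt j hj)))]
  rw [hsum]
  exact abs_e_le_phi hA hUB

lemma col_sum_le (hA1 : A1 ≤ m) (hA2 : A2 ≤ m) {B : Set Ω} (hB : MeasurableSet[A2] B)
    {ι : Type*} (s : Finset ι) (A : ι → Set Ω) (hA : ∀ j ∈ s, MeasurableSet[A1] (A j))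
    (hd : (↑s : Set ι).PairwiseDisjoint A) :
    ∑ j ∈ s, |(P (A j ∩ B)).toReal - (P (A j)).toReal * (P B).toReal|
      ≤ 2 * (P B).toReal := by
  classical
  refine sum_abs_le_two_mul s _ _ (fun t ht => ?_)
  have hAt : ∀ j ∈ t, MeasurableSet[A1] (A j) := fun j hj => hA j (ht hj)
  have hdt : (↑t : Set ι).PairwiseDisjoint A := hd.subset (by exact_mod_cast ht)
  have hsum : ∑ j ∈ t, ((P (A j ∩ B)).toReal - (P (A j)).toReal * (P B).toReal)
      = (P ((⋃ j ∈ t, A j) ∩ B)).toReal - (P (⋃ j ∈ t, A j)).toReal * (P B).toReal := by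
    rw [Finset.sum_sub_distrib, ← Finset.sum_mul]
    rw [← toReal_measure_biUnion hdt (fun j hj => hA1 _ (hAt j hj))]
    congr 1
    rw [Set.iUnion₂_inter]
    rw [toReal_measure_biUnion (fun i hi j hj hij =>
      ((hdt hi hj hij).mono inter_subset_left inter_subset_left))
      (fun j hj => (hA1 _ (hAt j hj)).inter (hA2 _ hB))]
  rw [hsum]
  exact abs_e_le_PB _ _

lemma collapse (f : Ω → ℝ) (s : Finset ℝ) (hfs : ∀ ω, f ω ∈ s) (c : ℝ → ℝ) (ω : Ω) :
    ∑ x ∈ s, (f ⁻¹' {x}).indicator (fun _ => c x) ω = c (f ω) := by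
  rw [Finset.sum_eq_single_of_mem (f ω) (hfs ω)]
  · exact Set.indicator_of_mem (by simp) _
  · intro x _ hne
    exact Set.indicator_of_notMem (by simp; exact fun h => hne h.symm) _

lemma integral_collapse (f : Ω → ℝ) (s : Finset ℝ) (hfs : ∀ ω, f ω ∈ s)
    (hmf : ∀ x : ℝ, MeasurableSet (f ⁻¹' {x})) (c : ℝ → ℝ) :
    ∫ ω, c (f ω) ∂P = ∑ x ∈ s, c x * (P (f ⁻¹' {x})).toReal := by
  have h1 : ∫ ω, c (f ω) ∂P
      = ∫ ω, ∑ x ∈ s, (f ⁻¹' {x}).indicator (fun _ => c x) ω ∂P := by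
    refine integral_congr_ae (Eventually.of_forall fun ω => ?_)
    exact (collapse f s hfs c ω).symm
  rw [h1, integral_finset_sum _ (fun x _ => (integrable_const (c x)).indicator (hmf x))]
  refine Finset.sum_congr rfl fun x _ => ?_
  rw [integral_indicator_const _ (hmf x), smul_eq_mul, mul_comm, measureReal_def]

lemma mul_collapse (f g : Ω → ℝ) (s t : Finset ℝ) (hfs : ∀ ω, f ω ∈ s)
    (hgs : ∀ ω, g ω ∈ t) (ω : Ω) :
    ∑ x ∈ s, ∑ y ∈ t,
        (f ⁻¹' {x} ∩ g ⁻¹' {y}).indicator (fun _ => x * y) ω = f ω * g ω := by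
  have key : ∀ x : ℝ, ∑ y ∈ t, (f ⁻¹' {x} ∩ g ⁻¹' {y}).indicator (fun _ => x * y) ω
      = (f ⁻¹' {x}).indicator (fun _ => x * g ω) ω := by
    intro x
    by_cases hx : ω ∈ f ⁻¹' {x}
    · rw [Set.indicator_of_mem hx]
      have : ∀ y ∈ t, (f ⁻¹' {x} ∩ g ⁻¹' {y}).indicator (fun _ => x * y) ω
          = (g ⁻¹' {y}).indicator (fun _ => x * y) ω := by
        intro y _
        by_cases hy : ω ∈ g ⁻¹' {y}
        · rw [Set.indicator_of_mem hy, Set.indicator_of_mem (Set.mem_inter hx hy)]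
        · rw [Set.indicator_of_notMem hy, Set.indicator_of_notMem (fun h => hy h.2)]
      rw [Finset.sum_congr rfl this, collapse g t hgs (fun y => x * y) ω]
    · rw [Set.indicator_of_notMem hx]
      refine Finset.sum_eq_zero fun y _ => Set.indicator_of_notMem (fun h => hx h.1) _
  rw [Finset.sum_congr rfl (fun x _ => key x), collapse f s hfs (fun x => x * g ω) ω]

lemma integral_mul_collapse (f g : Ω → ℝ) (s t : Finset ℝ) (hfs : ∀ ω, f ω ∈ s)
    (hgs : ∀ ω, g ω ∈ t) (hmf : ∀ x : ℝ, MeasurableSet (f ⁻¹' {x}))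
    (hmg : ∀ y : ℝ, MeasurableSet (g ⁻¹' {y})) :
    ∫ ω, f ω * g ω ∂P
      = ∑ x ∈ s, ∑ y ∈ t, (x * y) * (P (f ⁻¹' {x} ∩ g ⁻¹' {y})).toReal := by
  have h1 : ∫ ω, f ω * g ω ∂P = ∫ ω, ∑ x ∈ s, ∑ y ∈ t,
      (f ⁻¹' {x} ∩ g ⁻¹' {y}).indicator (fun _ => x * y) ω ∂P := by
    refine integral_congr_ae (Eventually.of_forall fun ω => ?_)
    exact (mul_collapse f g s t hfs hgs ω).symm
  rw [h1, integral_finset_sum _ (fun x _ => integrable_finset_sum _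
    (fun y _ => (integrable_const (x * y)).indicator ((hmf x).inter (hmg y))))]
  refine Finset.sum_congr rfl fun x _ => ?_
  rw [integral_finset_sum _
    (fun y _ => (integrable_const (x * y)).indicator ((hmf x).inter (hmg y)))]
  refine Finset.sum_congr rfl fun y _ => ?_
  rw [integral_indicator_const _ ((hmf x).inter (hmg y)), smul_eq_mul, mul_comm, measureReal_def]

lemma cov_simple_le (hA1 : A1 ≤ m) (hA2 : A2 ≤ m) {p q : ℝ}
    (hpq : Real.HolderConjugate p q)
    (f g : Ω → ℝ) (s t : Finset ℝ) (hfs : ∀ ω, f ω ∈ s) (hgs : ∀ ω, g ω ∈ t)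
    (hmf : ∀ x : ℝ, MeasurableSet[A1] (f ⁻¹' {x}))
    (hmg : ∀ y : ℝ, MeasurableSet[A2] (g ⁻¹' {y})) :
    cov P f g ≤ 2 * phiCoef P A1 A2 ^ (1/p)
      * (∫ ω, |f ω| ^ p ∂P) ^ (1/p) * (∫ ω, |g ω| ^ q ∂P) ^ (1/q) := by
  classical
  have hφ0 : 0 ≤ phiCoef P A1 A2 := phi_nonneg
  have hmf' : ∀ x : ℝ, MeasurableSet (f ⁻¹' {x}) := fun x => hA1 _ (hmf x)
  have hmg' : ∀ y : ℝ, MeasurableSet (g ⁻¹' {y}) := fun y => hA2 _ (hmg y)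
  have hdisjf : (↑s : Set ℝ).PairwiseDisjoint (fun x => f ⁻¹' {x}) :=
    fun a _ b _ hab => (Set.disjoint_singleton.mpr hab).preimage f
  have hdisjg : (↑t : Set ℝ).PairwiseDisjoint (fun y => g ⁻¹' {y}) :=
    fun a _ b _ hab => (Set.disjoint_singleton.mpr hab).preimage g
  set e : ℝ → ℝ → ℝ := fun x y =>
    (P (f ⁻¹' {x} ∩ g ⁻¹' {y})).toReal
      - (P (f ⁻¹' {x})).toReal * (P (g ⁻¹' {y})).toReal with he_def
  have hIf : ∫ ω, f ω ∂P = ∑ x ∈ s, x * (P (f ⁻¹' {x})).toReal := by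
    simpa using integral_collapse (P := P) f s hfs hmf' (fun x => x)
  have hIg : ∫ ω, g ω ∂P = ∑ y ∈ t, y * (P (g ⁻¹' {y})).toReal := by
    simpa using integral_collapse (P := P) g t hgs hmg' (fun y => y)
  have hIfp : ∫ ω, |f ω| ^ p ∂P = ∑ x ∈ s, |x| ^ p * (P (f ⁻¹' {x})).toReal :=
    integral_collapse (P := P) f s hfs hmf' (fun x => |x| ^ p)
  have hIgq : ∫ ω, |g ω| ^ q ∂P = ∑ y ∈ t, |y| ^ q * (P (g ⁻¹' {y})).toReal :=
    integral_collapse (P := P) g t hgs hmg' (fun y => |y| ^ q)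
  have hIfp0 : 0 ≤ ∫ ω, |f ω| ^ p ∂P :=
    integral_nonneg fun ω => Real.rpow_nonneg (abs_nonneg _) _
  have hIgq0 : 0 ≤ ∫ ω, |g ω| ^ q ∂P :=
    integral_nonneg fun ω => Real.rpow_nonneg (abs_nonneg _) _
  have hcov : cov P f g = ∑ x ∈ s, ∑ y ∈ t, (x * y) * e x y := by
    rw [cov, integral_mul_collapse (P := P) f g s t hfs hgs hmf' hmg', hIf, hIg,
      Finset.sum_mul_sum, ← Finset.sum_sub_distrib]
    refine Finset.sum_congr rfl fun x _ => ?_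
    rw [← Finset.sum_sub_distrib]
    refine Finset.sum_congr rfl fun y _ => ?_
    rw [he_def]; ring
  have hone : 1/p + 1/q = 1 := by
    rw [one_div, one_div]; exact hpq.inv_add_inv_eq_one
  have key1 : cov P f g ≤ ∑ z ∈ s ×ˢ t,
      (|z.1| * |e z.1 z.2| ^ (1/p)) * (|z.2| * |e z.1 z.2| ^ (1/q)) := by
    rw [hcov, ← Finset.sum_product']
    refine Finset.sum_le_sum fun z _ => ?_
    have he : |e z.1 z.2| ^ ((1:ℝ)/p) * |e z.1 z.2| ^ ((1:ℝ)/q) = |e z.1 z.2| := by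
      rw [← Real.rpow_add' (abs_nonneg _) (by rw [hone]; norm_num), hone, Real.rpow_one]
    calc (z.1 * z.2) * e z.1 z.2 ≤ |(z.1 * z.2) * e z.1 z.2| := le_abs_self _
      _ = (|z.1| * |z.2|) * (|e z.1 z.2| ^ ((1:ℝ)/p) * |e z.1 z.2| ^ ((1:ℝ)/q)) := by
          rw [abs_mul, abs_mul, he]
      _ = (|z.1| * |e z.1 z.2| ^ ((1:ℝ)/p)) * (|z.2| * |e z.1 z.2| ^ ((1:ℝ)/q)) := by
          ring
  have hFsum : ∑ z ∈ s ×ˢ t, |(|z.1| * |e z.1 z.2| ^ ((1:ℝ)/p))| ^ p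
      ≤ 2 * phiCoef P A1 A2 * ∫ ω, |f ω| ^ p ∂P := by
    have hterm : ∀ z : ℝ × ℝ, |(|z.1| * |e z.1 z.2| ^ ((1:ℝ)/p))| ^ p
        = |z.1| ^ p * |e z.1 z.2| := by
      intro z
      rw [abs_of_nonneg (mul_nonneg (abs_nonneg _) (Real.rpow_nonneg (abs_nonneg _) _)),
        Real.mul_rpow (abs_nonneg _) (Real.rpow_nonneg (abs_nonneg _) _),
        ← Real.rpow_mul (abs_nonneg _), one_div, inv_mul_cancel₀ hpq.ne_zero, Real.rpow_one]
    rw [Finset.sum_congr rfl (fun z _ => hterm z), Finset.sum_product, hIfp,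
      Finset.mul_sum]
    refine Finset.sum_le_sum fun x _ => ?_
    simp only [Prod.fst, Prod.snd]
    rw [← Finset.mul_sum]
    have hrow := row_sum_le (P := P) hA1 hA2 (hmf x) t (fun y => g ⁻¹' {y})
      (fun y _ => hmg y) hdisjg
    calc |x| ^ p * ∑ y ∈ t, |e x y|
        ≤ |x| ^ p * (2 * (phiCoef P A1 A2 * (P (f ⁻¹' {x})).toReal)) :=
          mul_le_mul_of_nonneg_left hrow (Real.rpow_nonneg (abs_nonneg _) _)
      _ = 2 * phiCoef P A1 A2 * (|x| ^ p * (P (f ⁻¹' {x})).toReal) := by ring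
  have hGsum : ∑ z ∈ s ×ˢ t, |(|z.2| * |e z.1 z.2| ^ ((1:ℝ)/q))| ^ q
      ≤ 2 * ∫ ω, |g ω| ^ q ∂P := by
    have hterm : ∀ z : ℝ × ℝ, |(|z.2| * |e z.1 z.2| ^ ((1:ℝ)/q))| ^ q
        = |z.2| ^ q * |e z.1 z.2| := by
      intro z
      rw [abs_of_nonneg (mul_nonneg (abs_nonneg _) (Real.rpow_nonneg (abs_nonneg _) _)),
        Real.mul_rpow (abs_nonneg _) (Real.rpow_nonneg (abs_nonneg _) _),
        ← Real.rpow_mul (abs_nonneg _), one_div, inv_mul_cancel₀ hpq.symm.ne_zero,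
        Real.rpow_one]
    rw [Finset.sum_congr rfl (fun z _ => hterm z), Finset.sum_product, Finset.sum_comm,
      hIgq, Finset.mul_sum]
    refine Finset.sum_le_sum fun y _ => ?_
    simp only [Prod.fst, Prod.snd]
    rw [← Finset.mul_sum]
    have hcol := col_sum_le (P := P) hA1 hA2 (hmg y) s (fun x => f ⁻¹' {x})
      (fun x _ => hmf x) hdisjf
    calc |y| ^ q * ∑ x ∈ s, |e x y|
        ≤ |y| ^ q * (2 * (P (g ⁻¹' {y})).toReal) :=
          mul_le_mul_of_nonneg_left hcol (Real.rpow_nonneg (abs_nonneg _) _)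
      _ = 2 * (|y| ^ q * (P (g ⁻¹' {y})).toReal) := by ring
  have holder := Real.inner_le_Lp_mul_Lq (s ×ˢ t)
    (fun z => |z.1| * |e z.1 z.2| ^ ((1:ℝ)/p))
    (fun z => |z.2| * |e z.1 z.2| ^ ((1:ℝ)/q)) hpq
  have hFnn : (0:ℝ) ≤ ∑ z ∈ s ×ˢ t, |(|z.1| * |e z.1 z.2| ^ ((1:ℝ)/p))| ^ p :=
    Finset.sum_nonneg fun z _ => Real.rpow_nonneg (abs_nonneg _) _
  have hGnn : (0:ℝ) ≤ ∑ z ∈ s ×ˢ t, |(|z.2| * |e z.1 z.2| ^ ((1:ℝ)/q))| ^ q :=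
    Finset.sum_nonneg fun z _ => Real.rpow_nonneg (abs_nonneg _) _
  have hF' : (∑ z ∈ s ×ˢ t, |(|z.1| * |e z.1 z.2| ^ ((1:ℝ)/p))| ^ p) ^ ((1:ℝ)/p)
      ≤ (2 * phiCoef P A1 A2 * ∫ ω, |f ω| ^ p ∂P) ^ ((1:ℝ)/p) :=
    Real.rpow_le_rpow hFnn hFsum (one_div_nonneg.mpr hpq.pos.le)
  have hG' : (∑ z ∈ s ×ˢ t, |(|z.2| * |e z.1 z.2| ^ ((1:ℝ)/q))| ^ q) ^ ((1:ℝ)/q)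
      ≤ (2 * ∫ ω, |g ω| ^ q ∂P) ^ ((1:ℝ)/q) :=
    Real.rpow_le_rpow hGnn hGsum (one_div_nonneg.mpr hpq.symm.pos.le)
  have hfinal : (2 * phiCoef P A1 A2 * ∫ ω, |f ω| ^ p ∂P) ^ ((1:ℝ)/p)
      * (2 * ∫ ω, |g ω| ^ q ∂P) ^ ((1:ℝ)/q)
      = 2 * phiCoef P A1 A2 ^ (1/p)
        * (∫ ω, |f ω| ^ p ∂P) ^ (1/p) * (∫ ω, |g ω| ^ q ∂P) ^ (1/q) := by
    rw [Real.mul_rpow (by positivity) hIfp0, Real.mul_rpow (by norm_num) hφ0,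
      Real.mul_rpow (by norm_num) hIgq0,
      show ((2:ℝ) ^ ((1:ℝ)/p)) * (phiCoef P A1 A2 ^ ((1:ℝ)/p))
        * ((∫ ω, |f ω| ^ p ∂P) ^ ((1:ℝ)/p))
        * ((2 ^ ((1:ℝ)/q)) * ((∫ ω, |g ω| ^ q ∂P) ^ ((1:ℝ)/q)))
        = (2 ^ ((1:ℝ)/p) * 2 ^ ((1:ℝ)/q)) * phiCoef P A1 A2 ^ ((1:ℝ)/p)
          * ((∫ ω, |f ω| ^ p ∂P) ^ ((1:ℝ)/p))
          * ((∫ ω, |g ω| ^ q ∂P) ^ ((1:ℝ)/q)) from by ring,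
      ← Real.rpow_add (by norm_num), hone, Real.rpow_one]
  calc cov P f g ≤ _ := key1
    _ ≤ _ := holder
    _ ≤ (2 * phiCoef P A1 A2 * ∫ ω, |f ω| ^ p ∂P) ^ ((1:ℝ)/p)
        * (2 * ∫ ω, |g ω| ^ q ∂P) ^ ((1:ℝ)/q) :=
      mul_le_mul hF' hG' (Real.rpow_nonneg hGnn _) (Real.rpow_nonneg (by positivity) _)
    _ = _ := hfinal

lemma toReal_eLpNorm_eq {r : ℝ} (hr : 0 < r) {W : Ω → ℝ}
    (hW : MemLp W (ENNReal.ofReal r) P) :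
    (eLpNorm W (ENNReal.ofReal r) P).toReal = (∫ ω, |W ω| ^ r ∂P) ^ (1/r) := by
  rw [hW.eLpNorm_eq_integral_rpow_norm (by simpa using hr) ENNReal.ofReal_ne_top]
  rw [ENNReal.toReal_ofReal (Real.rpow_nonneg
    (integral_nonneg fun ω => Real.rpow_nonneg (norm_nonneg _) _) _)]
  simp [ENNReal.toReal_ofReal hr.le, Real.norm_eq_abs, one_div]

lemma memℒp_one_mul {u v : Ω → ℝ} {p q : ℝ} (hpq : Real.HolderConjugate p q)
    (hu : MemLp u (ENNReal.ofReal p) P) (hv : MemLp v (ENNReal.ofReal q) P) :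
    Integrable (fun ω => u ω * v ω) P := by
  rw [← memLp_one_iff_integrable]
  have h : (1 : ℝ≥0∞) / 1 = 1 / ENNReal.ofReal p + 1 / ENNReal.ofReal q := by
    rw [one_div, one_div, one_div, ← ENNReal.ofReal_inv_of_pos hpq.pos,
      ← ENNReal.ofReal_inv_of_pos hpq.symm.pos,
      ← ENNReal.ofReal_add (inv_nonneg.mpr hpq.pos.le) (inv_nonneg.mpr hpq.symm.pos.le),
      inv_one, hpq.inv_add_inv_eq_one]
    simp
  haveI : ENNReal.HolderTriple (ENNReal.ofReal p) (ENNReal.ofReal q) 1 :=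
    ⟨by simpa [one_div] using h.symm⟩
  exact MemLp.smul (𝕜 := ℝ) hv hu


lemma abs_integral_mul_le {u v : Ω → ℝ} {p q : ℝ} (hpq : Real.HolderConjugate p q)
    (hu : MemLp u (ENNReal.ofReal p) P) (hv : MemLp v (ENNReal.ofReal q) P) :
    |∫ ω, u ω * v ω ∂P|
      ≤ (eLpNorm u (ENNReal.ofReal p) P).toReal
        * (eLpNorm v (ENNReal.ofReal q) P).toReal := by
  rw [toReal_eLpNorm_eq hpq.pos hu, toReal_eLpNorm_eq hpq.symm.pos hv]
  calc |∫ ω, u ω * v ω ∂P| ≤ ∫ ω, ‖u ω‖ * ‖v ω‖ ∂P := by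
        simpa [Real.norm_eq_abs, abs_mul] using
          norm_integral_le_integral_norm (μ := P) (f := fun ω => u ω * v ω)
    _ ≤ (∫ ω, ‖u ω‖ ^ p ∂P) ^ (1/p) * (∫ ω, ‖v ω‖ ^ q ∂P) ^ (1/q) :=
        integral_mul_norm_le_Lp_mul_Lq hpq hu hv
    _ = (∫ ω, |u ω| ^ p ∂P) ^ (1/p) * (∫ ω, |v ω| ^ q ∂P) ^ (1/q) := by
        simp_rw [Real.norm_eq_abs]

lemma abs_integral_le {u : Ω → ℝ} {p q : ℝ} (hpq : Real.HolderConjugate p q)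
    (hu : MemLp u (ENNReal.ofReal p) P) :
    |∫ ω, u ω ∂P| ≤ (eLpNorm u (ENNReal.ofReal p) P).toReal := by
  have hone : MemLp (fun _ : Ω => (1:ℝ)) (ENNReal.ofReal q) P := memLp_const 1
  have h := abs_integral_mul_le (P := P) hpq hu hone
  have h1 : (eLpNorm (fun _ : Ω => (1:ℝ)) (ENNReal.ofReal q) P).toReal = 1 := by
    rw [toReal_eLpNorm_eq hpq.symm.pos hone]
    simp [Real.one_rpow]
  simpa [h1] using h

lemma simple_approx_clean {Ωa : Type*} [mA : MeasurableSpace Ωa] {μ : Measure Ωa} {r : ℝ≥0∞}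
    (hr : r ≠ ∞) {X : Ωa → ℝ} (hX : MemLp X r μ) {ε : ℝ≥0∞} (hε : ε ≠ 0) :
    ∃ f : Ωa → ℝ, (∀ x : ℝ, MeasurableSet (f ⁻¹' {x}))
      ∧ (∃ s : Finset ℝ, ∀ ω, f ω ∈ s)
      ∧ (∃ C : ℝ, ∀ ω, ‖f ω‖ ≤ C) ∧ StronglyMeasurable f
      ∧ eLpNorm (X - f) r μ < ε := by
  obtain ⟨f, hf, _⟩ := hX.exists_simpleFunc_eLpNorm_sub_lt hr hε
  refine ⟨⇑f, fun x => f.measurableSet_fiber x,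
    ⟨f.range, fun ω => f.mem_range_self ω⟩, ?_, f.stronglyMeasurable, hf⟩
  refine ⟨((f.range.sup fun x : ℝ => ‖x‖₊ : NNReal) : ℝ), fun ω => ?_⟩
  have h := Finset.le_sup (f := fun x : ℝ => ‖x‖₊) (f.mem_range_self ω)
  exact_mod_cast h

lemma exists_simple_approx (hA1 : A1 ≤ m) {r : ℝ≥0∞} (hr : r ≠ ∞) {X : Ω → ℝ}
    (hXm : Measurable[A1] X) (hX : MemLp X r P) {ε : ℝ≥0∞} (hε : ε ≠ 0) :
    ∃ f : Ω → ℝ, (∀ x : ℝ, MeasurableSet[A1] (f ⁻¹' {x}))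
      ∧ (∃ s : Finset ℝ, ∀ ω, f ω ∈ s)
      ∧ MemLp f r P ∧ eLpNorm (X - f) r P < ε := by
  have hXsm : StronglyMeasurable[A1] X := hXm.stronglyMeasurable
  have hXtrim : MemLp X r (P.trim hA1) :=
    ⟨hXsm.aestronglyMeasurable, by rw [eLpNorm_trim hA1 hXsm]; exact hX.2⟩
  obtain ⟨f, hfib, hrange, ⟨C, hC⟩, hsm, hlt⟩ :=
    @simple_approx_clean Ω A1 (P.trim hA1) r hr X hXtrim ε hε
  refine ⟨f, hfib, hrange, ?_, ?_⟩
  · exact MemLp.of_bound ((hsm.mono hA1).aestronglyMeasurable) C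
      (Eventually.of_forall hC)
  · rw [← eLpNorm_trim hA1 (hXsm.sub hsm)]
    exact hlt

set_option maxHeartbeats 1000000 in
lemma key_step (hA1 : A1 ≤ m) (hA2 : A2 ≤ m)
    {p q : ℝ} (hpq : Real.HolderConjugate p q)
    {X Y : Ω → ℝ} (hXm : Measurable[A1] X) (hYm : Measurable[A2] Y)
    (hXp : MemLp X (ENNReal.ofReal p) P) (hYq : MemLp Y (ENNReal.ofReal q) P)
    {ε : ℝ} (hε : 0 < ε) :
    cov P X Y ≤ 2 * phiCoef P A1 A2 ^ (1/p)
        * ((eLpNorm X (ENNReal.ofReal p) P).toReal + ε)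
        * ((eLpNorm Y (ENNReal.ofReal q) P).toReal + ε)
      + ε * (2 * (eLpNorm X (ENNReal.ofReal p) P).toReal
        + 2 * (eLpNorm Y (ENNReal.ofReal q) P).toReal + 2 * ε) := by
  classical
  set p' := ENNReal.ofReal p with hp'
  set q' := ENNReal.ofReal q with hq'
  have h1p : (1:ℝ≥0∞) ≤ p' := by
    rw [hp', ENNReal.one_le_ofReal]; exact hpq.lt.le
  have h1q : (1:ℝ≥0∞) ≤ q' := by
    rw [hq', ENNReal.one_le_ofReal]; exact hpq.symm.lt.le
  set NX := (eLpNorm X p' P).toReal with hNX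
  set NY := (eLpNorm Y q' P).toReal with hNY
  have hNX0 : 0 ≤ NX := ENNReal.toReal_nonneg
  have hNY0 : 0 ≤ NY := ENNReal.toReal_nonneg
  have hφ0 : 0 ≤ phiCoef P A1 A2 := phi_nonneg
  have hK0 : 0 ≤ 2 * phiCoef P A1 A2 ^ (1/p) := by positivity
  have hεne : ENNReal.ofReal ε ≠ 0 := (ENNReal.ofReal_pos.mpr hε).ne'
  obtain ⟨f, hfib, ⟨s, hs⟩, hfmem, hflt⟩ :=
    exists_simple_approx (P := P) hA1 ENNReal.ofReal_ne_top hXm hXp hεne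
  obtain ⟨g, hgib, ⟨t, ht⟩, hgmem, hglt⟩ :=
    exists_simple_approx (P := P) hA2 ENNReal.ofReal_ne_top hYm hYq hεne
  have hXfmem : MemLp (X - f) p' P := hXp.sub hfmem
  have hYgmem : MemLp (Y - g) q' P := hYq.sub hgmem
  have hdfp : (eLpNorm (X - f) p' P).toReal ≤ ε :=
    ENNReal.toReal_le_of_le_ofReal hε.le hflt.le
  have hdgq : (eLpNorm (Y - g) q' P).toReal ≤ ε :=
    ENNReal.toReal_le_of_le_ofReal hε.le hglt.le
  set Nf := (eLpNorm f p' P).toReal with hNf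
  set Ng := (eLpNorm g q' P).toReal with hNg
  have hNf0 : 0 ≤ Nf := ENNReal.toReal_nonneg
  have hNg0 : 0 ≤ Ng := ENNReal.toReal_nonneg
  have hNfle : Nf ≤ NX + ε := by
    have h1 : eLpNorm f p' P ≤ eLpNorm X p' P + eLpNorm (X - f) p' P := by
      have hff : f = X - (X - f) := by funext ω; simp
      nth_rewrite 1 [hff]
      exact eLpNorm_sub_le hXp.1 hXfmem.1 h1p
    have h2 := ENNReal.toReal_mono
      (ENNReal.add_ne_top.2 ⟨hXp.eLpNorm_ne_top, hXfmem.eLpNorm_ne_top⟩) h1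
    rw [ENNReal.toReal_add hXp.eLpNorm_ne_top hXfmem.eLpNorm_ne_top] at h2
    linarith
  have hNgle : Ng ≤ NY + ε := by
    have h1 : eLpNorm g q' P ≤ eLpNorm Y q' P + eLpNorm (Y - g) q' P := by
      have hgg : g = Y - (Y - g) := by funext ω; simp
      nth_rewrite 1 [hgg]
      exact eLpNorm_sub_le hYq.1 hYgmem.1 h1q
    have h2 := ENNReal.toReal_mono
      (ENNReal.add_ne_top.2 ⟨hYq.eLpNorm_ne_top, hYgmem.eLpNorm_ne_top⟩) h1
    rw [ENNReal.toReal_add hYq.eLpNorm_ne_top hYgmem.eLpNorm_ne_top] at h2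
    linarith
  -- core bound for the simple approximations
  have hcore : cov P f g ≤ 2 * phiCoef P A1 A2 ^ (1/p) * Nf * Ng := by
    have h := cov_simple_le (P := P) hA1 hA2 hpq f g s t hs ht hfib hgib
    rwa [hNf, hNg, toReal_eLpNorm_eq hpq.pos hfmem, toReal_eLpNorm_eq hpq.symm.pos hgmem]
  have hcore' : cov P f g ≤ 2 * phiCoef P A1 A2 ^ (1/p) * (NX + ε) * (NY + ε) := by
    calc cov P f g ≤ 2 * phiCoef P A1 A2 ^ (1/p) * Nf * Ng := hcore
      _ ≤ 2 * phiCoef P A1 A2 ^ (1/p) * (NX + ε) * (NY + ε) := by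
        apply mul_le_mul (mul_le_mul le_rfl hNfle hNf0 hK0) hNgle hNg0
        positivity
  -- integrability facts
  have hXi : Integrable X P := hXp.integrable h1p
  have hYi : Integrable Y P := hYq.integrable h1q
  have hfi : Integrable f P := hfmem.integrable h1p
  have hgi : Integrable g P := hgmem.integrable h1q
  have hfg : Integrable (fun ω => f ω * g ω) P := memℒp_one_mul hpq hfmem hgmem
  have hXfY : Integrable (fun ω => (X ω - f ω) * Y ω) P := memℒp_one_mul hpq hXfmem hYq
  have hfYg : Integrable (fun ω => f ω * (Y ω - g ω)) P := memℒp_one_mul hpq hfmem hYgmem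
  -- decomposition
  have hprod : ∫ ω, X ω * Y ω ∂P = ∫ ω, f ω * g ω ∂P
      + (∫ ω, (X ω - f ω) * Y ω ∂P + ∫ ω, f ω * (Y ω - g ω) ∂P) := by
    have hpt : ∀ ω, X ω * Y ω
        = f ω * g ω + ((X ω - f ω) * Y ω + f ω * (Y ω - g ω)) := fun ω => by ring
    calc ∫ ω, X ω * Y ω ∂P
        = ∫ ω, (f ω * g ω + ((X ω - f ω) * Y ω + f ω * (Y ω - g ω))) ∂P :=
          integral_congr_ae (Eventually.of_forall hpt)
      _ = ∫ ω, f ω * g ω ∂P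
          + ∫ ω, ((X ω - f ω) * Y ω + f ω * (Y ω - g ω)) ∂P :=
          integral_add hfg (hXfY.add hfYg)
      _ = ∫ ω, f ω * g ω ∂P
          + (∫ ω, (X ω - f ω) * Y ω ∂P + ∫ ω, f ω * (Y ω - g ω) ∂P) := by
          rw [integral_add hXfY hfYg]
  have hYg_int : ∫ ω, Y ω - g ω ∂P = ∫ ω, Y ω ∂P - ∫ ω, g ω ∂P := integral_sub hYi hgi
  have hXf_int : ∫ ω, X ω - f ω ∂P = ∫ ω, X ω ∂P - ∫ ω, f ω ∂P := integral_sub hXi hfi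
  have hcovdec : cov P X Y = cov P f g
      + (∫ ω, (X ω - f ω) * Y ω ∂P + ∫ ω, f ω * (Y ω - g ω) ∂P)
      - ((∫ ω, X ω ∂P) * (∫ ω, Y ω - g ω ∂P) + (∫ ω, X ω - f ω ∂P) * ∫ ω, g ω ∂P) := by
    rw [cov, cov, hprod, hYg_int, hXf_int]; ring
  -- bounds on the error terms
  have b1 : |∫ ω, (X ω - f ω) * Y ω ∂P| ≤ ε * NY := by
    have h := abs_integral_mul_le (P := P) hpq hXfmem hYq
    calc |∫ ω, (X ω - f ω) * Y ω ∂P|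
        ≤ (eLpNorm (X - f) p' P).toReal * NY := h
      _ ≤ ε * NY := mul_le_mul_of_nonneg_right hdfp hNY0
  have b2 : |∫ ω, f ω * (Y ω - g ω) ∂P| ≤ (NX + ε) * ε := by
    have h := abs_integral_mul_le (P := P) hpq hfmem hYgmem
    calc |∫ ω, f ω * (Y ω - g ω) ∂P|
        ≤ Nf * (eLpNorm (Y - g) q' P).toReal := h
      _ ≤ (NX + ε) * ε :=
        mul_le_mul hNfle hdgq ENNReal.toReal_nonneg (by linarith)
  have b3 : |∫ ω, X ω ∂P| ≤ NX := abs_integral_le (P := P) hpq hXp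
  have b4 : |∫ ω, Y ω - g ω ∂P| ≤ ε := by
    have h := abs_integral_le (P := P) hpq.symm hYgmem
    exact h.trans hdgq
  have b5 : |∫ ω, X ω - f ω ∂P| ≤ ε := by
    have h := abs_integral_le (P := P) hpq hXfmem
    exact h.trans hdfp
  have b6 : |∫ ω, g ω ∂P| ≤ NY + ε := (abs_integral_le (P := P) hpq.symm hgmem).trans hNgle
  have c1 : (∫ ω, X ω ∂P) * (∫ ω, Y ω - g ω ∂P) ≥ -(NX * ε) := by
    have h2 := neg_abs_le ((∫ ω, X ω ∂P) * (∫ ω, Y ω - g ω ∂P))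
    rw [abs_mul] at h2
    nlinarith [abs_nonneg (∫ ω, X ω ∂P), abs_nonneg (∫ ω, Y ω - g ω ∂P)]
  have c2 : (∫ ω, X ω - f ω ∂P) * (∫ ω, g ω ∂P) ≥ -(ε * (NY + ε)) := by
    have h2 := neg_abs_le ((∫ ω, X ω - f ω ∂P) * (∫ ω, g ω ∂P))
    rw [abs_mul] at h2
    nlinarith [abs_nonneg (∫ ω, X ω - f ω ∂P), abs_nonneg (∫ ω, g ω ∂P),
      mul_le_mul b5 b6 (abs_nonneg _) hε.le]
  have d1 := le_abs_self (∫ ω, (X ω - f ω) * Y ω ∂P)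
  have d2 := le_abs_self (∫ ω, f ω * (Y ω - g ω) ∂P)
  rw [hcovdec]
  nlinarith [hcore', b1, b2, c1, c2, d1, d2]

end Aux

theorem cov_le_phi_mixing
    {Ω : Type*} (A1 A2 : MeasurableSpace Ω) [m : MeasurableSpace Ω]
    (hA1 : A1 ≤ m) (hA2 : A2 ≤ m)
    (P : Measure Ω) [IsProbabilityMeasure P]
    (p q : ℝ) (hp : 1 < p) (hq : 1 < q) (hpq : 1 / p + 1 / q = 1)
    (X Y : Ω → ℝ)
    (hXm : Measurable[A1] X) (hYm : Measurable[A2] Y)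
    (hXp : MemLp X (ENNReal.ofReal p) P) (hYq : MemLp Y (ENNReal.ofReal q) P) :
    cov P X Y ≤ 2 * phiCoef P A1 A2 ^ (1 / p)
        * (eLpNorm X (ENNReal.ofReal p) P).toReal
        * (eLpNorm Y (ENNReal.ofReal q) P).toReal
      ∧ 0 ≤ phiCoef P A1 A2 ∧ phiCoef P A1 A2 ≤ 1 := by
  have hpq' : Real.HolderConjugate p q := by
    refine Real.holderConjugate_iff.mpr ⟨hp, ?_⟩
    rw [← one_div, ← one_div]; exact hpq
  refine ⟨?_, phi_nonneg, phi_le_one⟩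
  set NX := (eLpNorm X (ENNReal.ofReal p) P).toReal with hNX
  set NY := (eLpNorm Y (ENNReal.ofReal q) P).toReal with hNY
  set K := 2 * phiCoef P A1 A2 ^ (1 / p) with hK
  have key : ∀ ε : ℝ, 0 < ε → cov P X Y
      ≤ K * (NX + ε) * (NY + ε) + ε * (2 * NX + 2 * NY + 2 * ε) :=
    fun ε hε => key_step hA1 hA2 hpq' hXm hYm hXp hYq hε
  have hcont : Tendsto (fun ε : ℝ => K * (NX + ε) * (NY + ε)
      + ε * (2 * NX + 2 * NY + 2 * ε)) (𝓝[>] (0:ℝ)) (𝓝 (K * NX * NY)) := by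
    have hc : Continuous (fun ε : ℝ => K * (NX + ε) * (NY + ε)
        + ε * (2 * NX + 2 * NY + 2 * ε)) := by continuity
    have h2 := (hc.tendsto 0).mono_left (nhdsWithin_le_nhds (s := Set.Ioi (0:ℝ)))
    simpa using h2
  exact ge_of_tendsto hcont
    (eventually_nhdsWithin_of_forall fun ε (hε : 0 < ε) => key ε hε)
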